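/- Let f : [0, z̄] → ℝ and constants t_ℓ define, for z_ℓ ∈ (0, z̄), the system: (1) v(n(z_ℓ), s, z_ℓ) − t_ℓ = 0 and (2) t_ℓ − c(s, z_ℓ) = 0, with v(x,s,z) = A s^a x z, c(s,z) = β s²/z, n(z) = k z^q, A,k,β > 0, 0 ≤ a < 1, q ≥ 0. Then for each z_ℓ > 0 the pair (s_ℓ, t_ℓ) = ( ((Ak/β) z_ℓ^{q+2})^{1/(2−a)}, β s_ℓ²/z_ℓ ) is the unique solution with s > 0, and the map z_ℓ ↦ t_ℓ(z_ℓ) = β^{−a/(2−a)} (Ak)^{2/(2−a)} z_ℓ^{(2q+2+a)/(2−a)} is strictly increasing and continuous on (0, z̄). -/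

import Mathlib

/-- The market-entry conditions determine a unique pair `(s_ℓ, t_ℓ)` for each `z_ℓ ∈ (0, z̄)`,
with closed forms, and the map `z_ℓ ↦ t_ℓ(z_ℓ)` has the stated power form and is strictly
increasing and continuous on `(0, z̄)`. -/
theorem entry_bounds_bijection (A k β q a zbar : ℝ) (hA : 0 < A) (hk : 0 < k) (hβ : 0 < β)
    (hq : 0 ≤ q) (ha0 : 0 ≤ a) (ha1 : a < 1) (hzbar : 0 < zbar) :
    let sℓ : ℝ → ℝ := fun z => ((A * k / β) * z ^ (q + 2)) ^ (1 / (2 - a))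
    let tℓ : ℝ → ℝ := fun z => β * (sℓ z) ^ 2 / z
    (∀ zℓ ∈ Set.Ioo (0 : ℝ) zbar,
      (0 < sℓ zℓ ∧
        A * (sℓ zℓ) ^ a * (k * zℓ ^ q) * zℓ - tℓ zℓ = 0 ∧
        tℓ zℓ - β * (sℓ zℓ) ^ 2 / zℓ = 0) ∧
      ∀ s t : ℝ, 0 < s → A * s ^ a * (k * zℓ ^ q) * zℓ - t = 0 → t - β * s ^ 2 / zℓ = 0 →
        s = sℓ zℓ ∧ t = tℓ zℓ) ∧
    (∀ zℓ ∈ Set.Ioo (0 : ℝ) zbar,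
      tℓ zℓ = β ^ (-(a / (2 - a))) * (A * k) ^ (2 / (2 - a)) * zℓ ^ ((2 * q + 2 + a) / (2 - a))) ∧
    StrictMonoOn tℓ (Set.Ioo 0 zbar) ∧ ContinuousOn tℓ (Set.Ioo 0 zbar) := by
  intro sℓ tℓ
  have h2a : (0:ℝ) < 2 - a := by linarith
  have h2a' : (2:ℝ) - a ≠ 0 := ne_of_gt h2a
  have hAkβ : 0 < A * k / β := div_pos (mul_pos hA hk) hβ
  have hXpos : ∀ z : ℝ, 0 < z → 0 < (A * k / β) * z ^ (q + 2) := fun z hz =>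
    mul_pos hAkβ (Real.rpow_pos_of_pos hz _)
  have hspos : ∀ z : ℝ, 0 < z → 0 < sℓ z := fun z hz =>
    Real.rpow_pos_of_pos (hXpos z hz) _
  have hkey : ∀ z : ℝ, 0 < z → (sℓ z) ^ (2 - a) = (A * k / β) * z ^ (q + 2) := by
    intro z hz
    show (((A * k / β) * z ^ (q + 2)) ^ (1 / (2 - a))) ^ (2 - a) = _
    rw [← Real.rpow_mul (hXpos z hz).le, one_div_mul_cancel h2a', Real.rpow_one]
  have hsq : ∀ z : ℝ, 0 < z → (sℓ z) ^ 2 = (A * k / β) * z ^ (q + 2) * (sℓ z) ^ a := by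
    intro z hz
    have hs := hspos z hz
    rw [← Real.rpow_two, ← hkey z hz, ← Real.rpow_add hs]
    congr 1; ring
  have hzq2 : ∀ z : ℝ, 0 < z → z ^ (q + 2) = z ^ q * z * z := by
    intro z hz
    rw [Real.rpow_add hz, Real.rpow_two]; ring
  -- power form
  have hpow : ∀ z : ℝ, 0 < z →
      tℓ z = β ^ (-(a / (2 - a))) * (A * k) ^ (2 / (2 - a)) * z ^ ((2 * q + 2 + a) / (2 - a)) := by
    intro z hz
    have hs := hspos z hz
    have h1 : (sℓ z) ^ 2 = ((A * k / β) * z ^ (q + 2)) ^ (2 / (2 - a)) := by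
      rw [← Real.rpow_two]
      show (((A * k / β) * z ^ (q + 2)) ^ (1 / (2 - a))) ^ (2:ℝ) = _
      rw [← Real.rpow_mul (hXpos z hz).le]
      congr 1
      field_simp
    have h2 : ((A * k / β) * z ^ (q + 2)) ^ (2 / (2 - a))
        = (A * k) ^ (2 / (2 - a)) / β ^ (2 / (2 - a)) * z ^ ((q + 2) * (2 / (2 - a))) := by
      rw [Real.mul_rpow hAkβ.le (Real.rpow_pos_of_pos hz _).le,
        Real.div_rpow (mul_pos hA hk).le hβ.le, ← Real.rpow_mul hz.le]
    have h3 : z ^ ((q + 2) * (2 / (2 - a))) = z ^ ((2 * q + 2 + a) / (2 - a)) * z := by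
      rw [show (q + 2) * (2 / (2 - a)) = (2 * q + 2 + a) / (2 - a) + 1 by field_simp; ring,
        Real.rpow_add hz, Real.rpow_one]
    have h4 : β ^ (-(a / (2 - a))) = β / β ^ (2 / (2 - a)) := by
      rw [show -(a / (2 - a)) = 1 - 2 / (2 - a) by field_simp; ring, Real.rpow_sub hβ,
        Real.rpow_one]
    show β * (sℓ z) ^ 2 / z = _
    rw [h1, h2, h3, h4]
    have hβe : (0:ℝ) < β ^ (2 / (2 - a)) := Real.rpow_pos_of_pos hβ _
    field_simp
  -- system solution and uniqueness
  refine ⟨?_, fun zℓ hz => hpow zℓ hz.1, ?_, ?_⟩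
  · rintro zℓ ⟨hz, -⟩
    have hs := hspos zℓ hz
    refine ⟨⟨hs, ?_, by ring⟩, ?_⟩
    · show A * (sℓ zℓ) ^ a * (k * zℓ ^ q) * zℓ - β * (sℓ zℓ) ^ 2 / zℓ = 0
      rw [hsq zℓ hz, hzq2 zℓ hz]
      field_simp
      ring
    · intro s t hs0 he1 he2
      have ht : t = β * s ^ 2 / zℓ := by linarith
      have he : A * s ^ a * (k * zℓ ^ q) * zℓ = β * s ^ 2 / zℓ := by linarith
      have hsa : (0:ℝ) < s ^ a := Real.rpow_pos_of_pos hs0 _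
      have hs2 : s ^ 2 = s ^ (2 - a) * s ^ a := by
        rw [← Real.rpow_two, ← Real.rpow_add hs0]; congr 1; ring
      have hkey2 : s ^ (2 - a) = (A * k / β) * zℓ ^ (q + 2) := by
        rw [hs2] at he
        rw [hzq2 zℓ hz]
        have := he
        field_simp at this ⊢
        nlinarith [this, hsa, hz]
      have hss : s = sℓ zℓ := by
        have : (s ^ (2 - a)) ^ (1 / (2 - a)) = s := by
          rw [← Real.rpow_mul hs0.le, mul_one_div, div_self h2a', Real.rpow_one]
        rw [← this, hkey2]
      refine ⟨hss, ?_⟩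
      rw [ht, hss]
  · -- strict mono
    intro x hx y hy hxy
    rw [hpow x hx.1, hpow y hy.1]
    have hC : 0 < β ^ (-(a / (2 - a))) * (A * k) ^ (2 / (2 - a)) :=
      mul_pos (Real.rpow_pos_of_pos hβ _) (Real.rpow_pos_of_pos (mul_pos hA hk) _)
    have hp : 0 < (2 * q + 2 + a) / (2 - a) := div_pos (by linarith) h2a
    exact mul_lt_mul_of_pos_left (Real.rpow_lt_rpow hx.1.le hxy hp) hC
  · -- continuity
    intro x hx
    have : ContinuousAt tℓ x := by
      have h1 : ContinuousAt (fun z : ℝ => z ^ ((2 * q + 2 + a) / (2 - a))) x :=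
        Real.continuousAt_rpow_const x _ (Or.inl hx.1.ne')
      have h2 : ContinuousAt (fun z : ℝ =>
          β ^ (-(a / (2 - a))) * (A * k) ^ (2 / (2 - a)) * z ^ ((2 * q + 2 + a) / (2 - a))) x :=
        h1.const_mul _
      refine h2.congr ?_
      filter_upwards [eventually_gt_nhds hx.1] with z hz using (hpow z hz).symm
    exact this.continuousWithinAt
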